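/- The toric Schur polynomial s_{λ/d/μ}(x_1,...,x_k) is nonzero if and only if the cylindric shape λ/d/μ is a toric shape. -/
import Mathlib


open Finset

/-- The set `P_{kn}` of partitions fitting in a `k × (n-k)` rectangle,
represented as antitone functions `Fin k → ℕ` bounded by `n - k`. -/
def PknFinset (k n : ℕ) : Finset (Fin k → ℕ) :=
  ((Finset.univ : Finset (Fin k → Fin (n - k + 1))).image (fun f i => (f i : ℕ))).filter
    (fun lam => ∀ i j : Fin k, i ≤ j → lam j ≤ lam i)

/-- The 01-word of a partition `λ ∈ P_{kn}`: position `j` (0-based; 1-based `j+1`)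
carries a `1` iff `j + 1 = λ_i + (k + 1 - i)` for some row `i`. -/
def omegaWord (n : ℕ) {k : ℕ} (lam : Fin k → ℕ) : Fin n → Bool :=
  fun j => decide (∃ i : Fin k, lam i + (k - (i : ℕ)) = (j : ℕ) + 1)

/-- The complement partition `λ∨`, with `λ∨_i = n - k - λ_{k+1-i}`. -/
def complP (n k : ℕ) (lam : Fin k → ℕ) : Fin k → ℕ :=
  fun i => (n - k) - lam (Fin.rev i)

/-- Size of the Durfee square of `λ` (number of boxes on the main diagonal). -/
def diag0 {k : ℕ} (lam : Fin k → ℕ) : ℕ :=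
  (Finset.univ.filter (fun i : Fin k => (i : ℕ) < lam i)).card

/-- Number of boxes of `λ` on the `i`-th diagonal. -/
def diagI {k : ℕ} (lam : Fin k → ℕ) (i : ℤ) : ℕ :=
  (Finset.univ.filter (fun a : Fin k => 0 ≤ (a : ℤ) + i ∧ (a : ℤ) + 1 + i ≤ (lam a : ℤ))).card

/-- `|λ| = λ_1 + ⋯ + λ_k`. -/
def psize {k : ℕ} (lam : Fin k → ℕ) : ℕ := ∑ i, lam i

/-- The value at index `t` of the cylindric loop `λ[r]`: the `(k,n)`-periodic
weakly decreasing sequence with `λ[r]_{i+r} = λ_i + r` for `1 ≤ i ≤ k`. -/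
def loopVal (n : ℕ) {k : ℕ} (lam : Fin k → ℕ) (r t : ℤ) : ℤ :=
  if h : 0 < k then
    (lam ⟨((t - r - 1) % (k : ℤ)).toNat, by
      have hk0 : ((k : ℤ)) ≠ 0 := by exact_mod_cast h.ne'
      have h1 : 0 ≤ (t - r - 1) % (k : ℤ) := Int.emod_nonneg _ hk0
      have h2 : (t - r - 1) % (k : ℤ) < (k : ℤ) := Int.emod_lt_of_pos _ (by exact_mod_cast h)
      omega⟩ : ℤ) + r - ((t - r - 1) / (k : ℤ)) * ((n : ℤ) - (k : ℤ))
  else 0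

/-- The cylindric diagram of shape `λ[r]/μ[s]`, as a `Shift`-invariant subset of `ℤ²`
(whose quotient modulo `(-k, n-k)ℤ` is the diagram in the cylinder). -/
def cylDiagram (n : ℕ) {k : ℕ} (lam mu : Fin k → ℕ) (r s : ℤ) : Set (ℤ × ℤ) :=
  {p | loopVal n mu s p.1 < p.2 ∧ p.2 ≤ loopVal n lam r p.1}

/-- The cylindric shape `λ[r]/μ[s]` is toric: the projection of its diagram from the
cylinder `ℤ²/(-k, n-k)ℤ` to the torus `(ℤ/k) × (ℤ/(n-k))` is injective. -/
def IsToricShape (n : ℕ) {k : ℕ} (lam mu : Fin k → ℕ) (r s : ℤ) : Prop :=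
  ∀ p q : ℤ × ℤ, p ∈ cylDiagram n lam mu r s → q ∈ cylDiagram n lam mu r s →
    (k : ℤ) ∣ (q.1 - p.1) → ((n : ℤ) - k) ∣ (q.2 - p.2) →
    ∃ m : ℤ, q.1 = p.1 - m * k ∧ q.2 = p.2 + m * ((n : ℤ) - k)

/-- A semi-standard cylindric tableau of shape `λ/d/μ = λ[d]/μ[0]`, encoded as a
`Shift`-periodic function on `ℤ²` that is positive exactly on the diagram, weakly
increasing along rows and strictly increasing along columns. -/
def IsCylTableau (n : ℕ) {k : ℕ} (lam mu : Fin k → ℕ) (d : ℕ) (T : ℤ × ℤ → ℕ) : Prop :=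
  (∀ p : ℤ × ℤ, p ∈ cylDiagram n lam mu (d : ℤ) 0 ↔ 0 < T p) ∧
  (∀ p : ℤ × ℤ, T (p.1 - (k : ℤ), p.2 + ((n : ℤ) - k)) = T p) ∧
  (∀ p : ℤ × ℤ, p ∈ cylDiagram n lam mu (d : ℤ) 0 →
      (p.1, p.2 + 1) ∈ cylDiagram n lam mu (d : ℤ) 0 → T p ≤ T (p.1, p.2 + 1)) ∧
  (∀ p : ℤ × ℤ, p ∈ cylDiagram n lam mu (d : ℤ) 0 →
      (p.1 + 1, p.2) ∈ cylDiagram n lam mu (d : ℤ) 0 → T p < T (p.1 + 1, p.2))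

/-- The number of entries of the cylindric tableau `T` equal to `c`, counted once per
`Shift`-orbit (rows `1,…,k` form a fundamental domain). -/
noncomputable def cylWeight (k : ℕ) (T : ℤ × ℤ → ℕ) (c : ℕ) : ℕ :=
  {p : ℤ × ℤ | 1 ≤ p.1 ∧ p.1 ≤ (k : ℤ) ∧ T p = c}.ncard

/-- Number of semi-standard cylindric tableaux of shape `λ/d/μ` with weight `β`
(entries taken among `1, …, l`). -/
noncomputable def tabCount (n : ℕ) {k : ℕ} (lam mu : Fin k → ℕ) (d : ℕ) {l : ℕ} (beta : Fin l → ℕ) : ℕ :=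
  {T : ℤ × ℤ → ℕ | IsCylTableau n lam mu d T ∧
    (∀ i : Fin l, cylWeight k T ((i : ℕ) + 1) = beta i) ∧
    (∀ c : ℕ, l < c → cylWeight k T c = 0)}.ncard

/-- The elementary symmetric generator `e_t` of `ℤ[q, e_1, …, e_k]` (zero out of range,
`1` for `t = 0`).  The variable `none` is the quantum parameter `q`. -/
noncomputable def epolyZ (k : ℕ) (t : ℤ) : MvPolynomial (Option (Fin k)) ℤ :=
  if t = 0 then 1
  else if h : 0 < t ∧ t ≤ (k : ℤ) then MvPolynomial.X (some ⟨(t - 1).toNat, by omega⟩) else 0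

/-- The complete homogeneous symmetric function `h_m`, expressed in the `e_i`
via the dual Jacobi–Trudi determinant. -/
noncomputable def hpolyD (k m : ℕ) : MvPolynomial (Option (Fin k)) ℤ :=
  Matrix.det (Matrix.of (fun i j : Fin m => epolyZ k (1 + (j : ℤ) - (i : ℤ))))

/-- `h_t` with the convention `h_t = 0` for `t < 0`. -/
noncomputable def hpolyDZ (k : ℕ) (t : ℤ) : MvPolynomial (Option (Fin k)) ℤ :=
  if 0 ≤ t then hpolyD k t.toNat else 0

/-- The ideal `I_q = ⟨h_{n-k+1}, …, h_{n-1}, h_n + (-1)^k q⟩` of `ℤ[q, e_1, …, e_k]`. -/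
noncomputable def qIdeal (k n : ℕ) : Ideal (MvPolynomial (Option (Fin k)) ℤ) :=
  Ideal.span ((hpolyD k '' (Set.Ioo (n - k) n)) ∪
    {hpolyD k n + ((-1) ^ k : ℤ) • MvPolynomial.X none})

/-- The quantum cohomology ring `QH*(Gr_{k,n}) = ℤ[q, e_1, …, e_k]/I_q`. -/
abbrev QHRing (k n : ℕ) := MvPolynomial (Option (Fin k)) ℤ ⧸ qIdeal k n

/-- The class of the quantum parameter `q` in `QH*(Gr_{k,n})`. -/
noncomputable def qClass (k n : ℕ) : QHRing k n := Ideal.Quotient.mk _ (MvPolynomial.X none)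

/-- The Schubert class `σ_λ ∈ QH*(Gr_{k,n})`, defined by the (quantum) Giambelli
formula `σ_λ = det(h_{λ_i + j - i})`. -/
noncomputable def sigmaClass (k n : ℕ) (lam : Fin k → ℕ) : QHRing k n :=
  Ideal.Quotient.mk _
    (Matrix.det (Matrix.of (fun i j : Fin k => hpolyDZ k ((lam i : ℤ) + (j : ℤ) - (i : ℤ)))))

/-- The special class `h_j = σ_{(j)}`. -/
noncomputable def hClass (k n : ℕ) (j : ℕ) : QHRing k n := Ideal.Quotient.mk _ (hpolyD k j)

/-- The special class `e_j = σ_{(1^j)}`. -/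
noncomputable def eClass (k n : ℕ) (j : ℕ) : QHRing k n := Ideal.Quotient.mk _ (epolyZ k (j : ℤ))

/-- The statement that `gw` is the family of structure constants (Gromov–Witten
invariants) of `QH*(Gr_{k,n})`:
`σ_μ * σ_ν = ∑_{d,λ} q^d C_{μν}^{λ,d} σ_λ` (all structure constants vanish
beyond degree `2k(n-k)`, which bounds the possible degrees). -/
def IsGWFamily (k n : ℕ)
    (gw : (Fin k → ℕ) → (Fin k → ℕ) → (Fin k → ℕ) → ℕ → ℤ) : Prop :=
  ∀ mu nu : Fin k → ℕ, mu ∈ PknFinset k n → nu ∈ PknFinset k n →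
    (sigmaClass k n mu * sigmaClass k n nu =
      ∑ e ∈ Finset.range (2 * k * (n - k) + 1), ∑ lm ∈ PknFinset k n,
        gw mu nu lm e • (qClass k n ^ e * sigmaClass k n lm)) ∧
    (∀ e lm, 2 * k * (n - k) < e → gw mu nu lm e = 0)

/-- Recover a partition in `P_{kn}` from a 01-word with `k` ones. -/
def partOfWord (k n : ℕ) (w : Fin n → Bool) : Fin k → ℕ :=
  fun i =>
    if h : (Finset.univ.filter (fun j : Fin n => w j = true)).card = k then
      ((Finset.orderIsoOfFin _ h (Fin.rev i) : Fin n) : ℕ) + 1 - (k - (i : ℕ))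
    else 0

/-- Cyclic rotation of a 01-word: `(rotWord a w)_j = w_{j+a mod n}`. -/
def rotWord (n : ℕ) (a : ℤ) (w : Fin n → Bool) : Fin n → Bool :=
  fun j =>
    if h : 0 < n then
      w ⟨(((j : ℤ) + a) % (n : ℤ)).toNat, by
        have hn0 : ((n : ℤ)) ≠ 0 := by exact_mod_cast h.ne'
        have h1 : 0 ≤ ((j : ℤ) + a) % (n : ℤ) := Int.emod_nonneg _ hn0
        have h2 : ((j : ℤ) + a) % (n : ℤ) < (n : ℤ) := Int.emod_lt_of_pos _ (by exact_mod_cast h)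
        omega⟩
    else false
  
/-- The `a`-th power of the cyclic shift `S` on `P_{kn}`:
`S^a(λ)` is the partition whose 01-word is `ω(λ)` rotated by `a`. -/
def Srot (k n : ℕ) (a : ℤ) (lam : Fin k → ℕ) : Fin k → ℕ :=
  partOfWord k n (rotWord n a (omegaWord n lam))

/-- `φ_i(λ)`: for `1 ≤ i ≤ n` the partial sum `ω_1 + ⋯ + ω_i` of the 01-word of `λ`,
extended to all `i ∈ ℤ` by `φ_{i+n} = φ_i + k`. -/
def phi (n : ℕ) {k : ℕ} (lam : Fin k → ℕ) (i : ℤ) : ℤ :=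
  ((Finset.univ.filter
      (fun j : Fin n => ((j : ℕ) : ℤ) < i % (n : ℤ) ∧ omegaWord n lam j = true)).card : ℤ)
    + (k : ℤ) * (i / (n : ℤ))

/-- `C_{λμν}(q) = ∑_e CCoef(λ,μ,ν,e) q^e`: the coefficient of `q^e` in the
Gromov–Witten generating function `q^d C^d_{λμν}` (zero unless `e` equals the
degree `d = (|λ|+|μ|+|ν|-k(n-k))/n`), where `C^d_{λμν} = C_{λμ}^{ν∨,d}`. -/
def CCoef (k n : ℕ) (gw : (Fin k → ℕ) → (Fin k → ℕ) → (Fin k → ℕ) → ℕ → ℤ)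
    (lam mu nu : Fin k → ℕ) (e : ℕ) : ℤ :=
  if ((psize lam : ℤ) + psize mu + psize nu) = (k : ℤ) * ((n : ℤ) - k) + (e : ℤ) * n then
    gw lam mu (complP n k nu) e
  else 0

section ToricAux

variable {k n : ℕ}

lemma pkn_facts {lam : Fin k → ℕ} (h : lam ∈ PknFinset k n) :
    (∀ i j : Fin k, i ≤ j → lam j ≤ lam i) ∧ ∀ i, lam i ≤ n - k := by
  rw [PknFinset, Finset.mem_filter, Finset.mem_image] at h
  obtain ⟨⟨f, -, hf⟩, hanti⟩ := h
  refine ⟨hanti, fun i => ?_⟩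
  have : lam i = (f i : ℕ) := by rw [← hf]
  have := (f i).isLt
  omega

lemma loopVal_eq (hk : 0 < k) (lam : Fin k → ℕ) (r t : ℤ) (i : Fin k)
    (hi : ((i : ℕ) : ℤ) = (t - r - 1) % (k : ℤ)) :
    loopVal n lam r t = (lam i : ℤ) + r - ((t - r - 1) / (k : ℤ)) * ((n : ℤ) - k) := by
  simp only [loopVal, dif_pos hk]
  have key : ∀ (jv : ℕ) (hj : jv < k), jv = (i : ℕ) → (lam ⟨jv, hj⟩ : ℕ) = lam i := by
    rintro jv hj h
    congr 1
    exact Fin.ext h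
  rw [key _ _ (by omega)]

lemma loopVal_add_mul_k (hk : 0 < k) (lam : Fin k → ℕ) (r t m : ℤ) :
    loopVal n lam r (t + m * k) = loopVal n lam r t - m * ((n : ℤ) - k) := by
  have hkz : ((k : ℤ)) ≠ 0 := by exact_mod_cast hk.ne'
  have hkzpos : (0:ℤ) < (k:ℤ) := by exact_mod_cast hk
  have h3 := Int.emod_nonneg (t - r - 1) hkz
  have h4 := Int.emod_lt_of_pos (t - r - 1) hkzpos
  set i : Fin k := ⟨((t - r - 1) % (k:ℤ)).toNat, by omega⟩ with hidef
  have hival : ((i : ℕ) : ℤ) = (t - r - 1) % (k : ℤ) := by simp [hidef]; omega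
  have e1 := loopVal_eq (n := n) hk lam r t i hival
  have e2 : t + m * (k : ℤ) - r - 1 = (t - r - 1) + m * k := by ring
  have e3 := loopVal_eq (n := n) hk lam r (t + m * k) i
    (by rw [e2, Int.add_mul_emod_self_right]; exact hival)
  rw [e2, Int.add_mul_ediv_right _ _ hkz] at e3
  rw [e1, e3]; ring

lemma loopVal_succ_le (hk : 0 < k) (hkn : k < n) (lam : Fin k → ℕ)
    (hanti : ∀ i j : Fin k, i ≤ j → lam j ≤ lam i) (hbd : ∀ i, lam i ≤ n - k)
    (r t : ℤ) : loopVal n lam r (t + 1) ≤ loopVal n lam r t := by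
  have hkz : ((k : ℤ)) ≠ 0 := by exact_mod_cast hk.ne'
  have hkzpos : (0:ℤ) < (k:ℤ) := by exact_mod_cast hk
  set u := t - r - 1 with hu
  have h1 := Int.mul_ediv_add_emod u (k:ℤ)
  have h2 := Int.mul_ediv_add_emod (u+1) (k:ℤ)
  have h3 := Int.emod_nonneg u hkz
  have h4 := Int.emod_lt_of_pos u hkzpos
  have h5 := Int.emod_nonneg (u+1) hkz
  have h6 := Int.emod_lt_of_pos (u+1) hkzpos
  have hD : (k:ℤ) * ((u+1)/k - u/k) = u % k + 1 - (u+1) % k := by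
    rw [mul_sub]; linarith
  set i1 : Fin k := ⟨(u % (k:ℤ)).toNat, by omega⟩ with hi1def
  set i2 : Fin k := ⟨((u+1) % (k:ℤ)).toNat, by omega⟩ with hi2def
  have hi1val : ((i1 : ℕ) : ℤ) = u % (k:ℤ) := by simp [hi1def]; omega
  have hi2val : ((i2 : ℕ) : ℤ) = (u+1) % (k:ℤ) := by simp [hi2def]; omega
  have e1 := loopVal_eq (n := n) hk lam r t i1 (by rw [← hu]; exact hi1val)
  have eu : t + 1 - r - 1 = u + 1 := by rw [hu]; ring
  have e2 := loopVal_eq (n := n) hk lam r (t + 1) i2 (by rw [eu]; exact hi2val)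
  rw [eu] at e2
  rw [← hu] at e1
  rw [e1, e2]
  by_cases hc : u % (k:ℤ) + 1 < k
  · have hDz : (u+1)/(k:ℤ) = u/k := by
      rcases lt_trichotomy ((u+1)/(k:ℤ) - u/k) 0 with h | h | h
      · exfalso
        have h' : (u+1)/(k:ℤ) - u/k ≤ -1 := by omega
        have := mul_le_mul_of_nonneg_left h' hkzpos.le
        simp only [mul_neg, mul_one] at this
        linarith
      · omega
      · exfalso
        have h' : (1:ℤ) ≤ (u+1)/(k:ℤ) - u/k := by omega
        have := mul_le_mul_of_nonneg_left h' hkzpos.le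
        simp only [mul_one] at this
        linarith
    have hmod : (u+1) % (k:ℤ) = u % k + 1 := by rw [hDz] at hD; linarith
    have hidx : (lam i2 : ℕ) ≤ lam i1 := by
      apply hanti
      rw [Fin.le_def]
      omega
    have hidx' : (lam i2 : ℤ) ≤ (lam i1 : ℤ) := by exact_mod_cast hidx
    rw [hDz]
    linarith
  · have hc' : u % (k:ℤ) = k - 1 := by omega
    have hDz : (u+1)/(k:ℤ) = u/k + 1 := by
      rcases lt_trichotomy ((u+1)/(k:ℤ) - u/k) 1 with h | h | h
      · exfalso
        have h' : (u+1)/(k:ℤ) - u/k ≤ 0 := by omega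
        have := mul_le_mul_of_nonneg_left h' hkzpos.le
        simp only [mul_zero] at this
        omega
      · omega
      · exfalso
        have h' : (2:ℤ) ≤ (u+1)/(k:ℤ) - u/k := by omega
        have := mul_le_mul_of_nonneg_left h' hkzpos.le
        linarith
    have hb1 : (lam i2 : ℕ) ≤ n - k := hbd _
    have hb1' : (lam i2 : ℤ) ≤ (n:ℤ) - k := by omega
    have hb2' : (0:ℤ) ≤ (lam i1 : ℤ) := by positivity
    rw [hDz]
    have expand : ((u/(k:ℤ))+1)*((n:ℤ)-k) = (u/(k:ℤ))*((n:ℤ)-k) + ((n:ℤ)-k) := by ring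
    rw [expand]
    linarith

lemma loopVal_anti (hk : 0 < k) (hkn : k < n) (lam : Fin k → ℕ)
    (hanti : ∀ i j : Fin k, i ≤ j → lam j ≤ lam i) (hbd : ∀ i, lam i ≤ n - k)
    (r : ℤ) {s t : ℤ} (hst : s ≤ t) : loopVal n lam r t ≤ loopVal n lam r s := by
  obtain ⟨m, rfl⟩ : ∃ m : ℕ, t = s + m := ⟨(t - s).toNat, by omega⟩
  clear hst
  induction m with
  | zero => simp
  | succ m ih =>
    have h1 := loopVal_succ_le hk hkn lam hanti hbd r (s + m)
    have e : s + ((m + 1 : ℕ) : ℤ) = (s + (m : ℤ)) + 1 := by push_cast; ring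
    rw [e]
    exact le_trans h1 ih

lemma loopVal_one (hk : 0 < k) (lam : Fin k → ℕ) :
    loopVal n lam 0 1 = (lam ⟨0, hk⟩ : ℤ) := by
  have := loopVal_eq (n := n) hk lam 0 1 ⟨0, hk⟩ (by simp)
  simpa using this

lemma mem_cylDiagram {k n : ℕ} {lam mu : Fin k → ℕ} {r s x y : ℤ} :
    ((x, y) : ℤ × ℤ) ∈ cylDiagram n lam mu r s ↔
      loopVal n mu s x < y ∧ y ≤ loopVal n lam r x := Iff.rfl

lemma mem_cylDiagram' {k n : ℕ} {lam mu : Fin k → ℕ} {r s : ℤ} {p : ℤ × ℤ} :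
    p ∈ cylDiagram n lam mu r s ↔
      loopVal n mu s p.1 < p.2 ∧ p.2 ≤ loopVal n lam r p.1 := Iff.rfl

lemma cylDiagram_shift {k n : ℕ} (hk : 0 < k) {lam mu : Fin k → ℕ} {r s : ℤ} (m x y : ℤ) :
    ((x - m * k, y + m * ((n : ℤ) - k)) : ℤ × ℤ) ∈ cylDiagram n lam mu r s ↔
      ((x, y) : ℤ × ℤ) ∈ cylDiagram n lam mu r s := by
  have h1 := loopVal_add_mul_k (n := n) hk mu s x (-m)
  have h2 := loopVal_add_mul_k (n := n) hk lam r x (-m)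
  have e : x + (-m) * (k : ℤ) = x - m * k := by ring
  rw [e] at h1 h2
  rw [mem_cylDiagram, mem_cylDiagram, h1, h2]
  constructor
  · rintro ⟨u, v⟩; exact ⟨by linarith, by linarith⟩
  · rintro ⟨u, v⟩; exact ⟨by linarith, by linarith⟩

lemma toric_of_rowOK {k n : ℕ} (hk : 0 < k) (hkn : k < n) (lam mu : Fin k → ℕ) (d : ℤ)
    (hrow : ∀ x : ℤ, loopVal n lam d x ≤ loopVal n mu 0 x + ((n : ℤ) - k)) :
    IsToricShape n lam mu d 0 := by
  have hnk : (1 : ℤ) ≤ (n : ℤ) - k := by omega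
  rintro ⟨p1, p2⟩ ⟨q1, q2⟩ hp hq hdk hdnk
  obtain ⟨a, ha⟩ := hdk
  obtain ⟨bb, hb⟩ := hdnk
  dsimp only at ha hb ⊢
  have hq' : ((p1, p2 + (a + bb) * ((n : ℤ) - k)) : ℤ × ℤ) ∈ cylDiagram n lam mu d 0 := by
    have hsh := (cylDiagram_shift (n := n) hk a q1 q2).2 hq
    have e1 : q1 - a * (k : ℤ) = p1 := by rw [mul_comm]; linarith
    have e2 : q2 + a * ((n : ℤ) - k) = p2 + (a + bb) * ((n : ℤ) - k) := by
      have : q2 = p2 + ((n : ℤ) - k) * bb := by linarith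
      rw [this]; ring
    rw [e1, e2] at hsh
    exact hsh
  by_cases hab : a + bb = 0
  · refine ⟨-a, ?_, ?_⟩
    · have e : -a * (k : ℤ) = -((k : ℤ) * a) := by ring
      rw [e]; linarith
    · have hba : bb = -a := by omega
      have e : -a * ((n : ℤ) - k) = ((n : ℤ) - k) * bb := by rw [hba]; ring
      rw [e]; linarith
  · exfalso
    rw [mem_cylDiagram] at hp hq'
    obtain ⟨h1, h2⟩ := hp
    obtain ⟨h3, h4⟩ := hq'
    have h5 := hrow p1
    rcases lt_trichotomy (a + bb) 0 with h | h | h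
    · have h' : a + bb ≤ -1 := by omega
      have hm := mul_le_mul_of_nonneg_right h' (by linarith : (0 : ℤ) ≤ (n : ℤ) - k)
      linarith
    · exact hab h
    · have h' : (1 : ℤ) ≤ a + bb := by omega
      have hm := mul_le_mul_of_nonneg_right h' (by linarith : (0 : ℤ) ≤ (n : ℤ) - k)
      linarith

lemma rowOK_of_toric {k n : ℕ} (hk : 0 < k) (hkn : k < n) (lam mu : Fin k → ℕ) (d : ℤ)
    (htor : IsToricShape n lam mu d 0) :
    ∀ x : ℤ, loopVal n lam d x ≤ loopVal n mu 0 x + ((n : ℤ) - k) := by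
  intro x
  by_contra hcon
  push_neg at hcon
  set y := loopVal n mu 0 x + 1 with hy
  have hp : ((x, y) : ℤ × ℤ) ∈ cylDiagram n lam mu d 0 :=
    mem_cylDiagram.mpr ⟨by omega, by omega⟩
  have hq : ((x, y + ((n : ℤ) - k)) : ℤ × ℤ) ∈ cylDiagram n lam mu d 0 :=
    mem_cylDiagram.mpr ⟨by omega, by omega⟩
  obtain ⟨m, hm1, hm2⟩ := htor _ _ hp hq ⟨0, by ring⟩ ⟨1, by ring⟩
  dsimp only at hm1 hm2
  have hm0 : m * (k : ℤ) = 0 := by linarith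
  have hmz : m = 0 := by
    rcases mul_eq_zero.1 hm0 with h | h
    · exact h
    · exact absurd h (by exact_mod_cast hk.ne')
  rw [hmz, zero_mul] at hm2
  omega

lemma rowOK_of_tableau {k n : ℕ} (hk : 0 < k) (hkn : k < n) (lam mu : Fin k → ℕ)
    (hmA : ∀ i j : Fin k, i ≤ j → mu j ≤ mu i) (hmB : ∀ i, mu i ≤ n - k)
    (hlA : ∀ i j : Fin k, i ≤ j → lam j ≤ lam i) (hlB : ∀ i, lam i ≤ n - k)
    (d : ℕ) (T : ℤ × ℤ → ℕ) (hT : IsCylTableau n lam mu d T) (hTk : ∀ p, T p ≤ k) :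
    ∀ x : ℤ, loopVal n lam (d : ℤ) x ≤ loopVal n mu 0 x + ((n : ℤ) - k) := by
  intro x
  by_contra hcon
  push_neg at hcon
  obtain ⟨hpos, hshift, hrw, hcol⟩ := hT
  set y := loopVal n mu 0 x + 1 with hy
  have hmem : ∀ j : ℤ, 0 ≤ j → j ≤ k → ((x + j, y) : ℤ × ℤ) ∈ cylDiagram n lam mu (d : ℤ) 0 := by
    intro j h0 hjk
    rw [mem_cylDiagram]
    have hmono := loopVal_anti hk hkn mu hmA hmB 0 (show x ≤ x + j by omega)
    have h1 := loopVal_anti hk hkn lam hlA hlB (d : ℤ) (show x + j ≤ x + k by omega)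
    have h2 := loopVal_add_mul_k (n := n) hk lam (d : ℤ) x 1
    have e : x + 1 * (k : ℤ) = x + k := by ring
    rw [e, one_mul] at h2
    exact ⟨by omega, by omega⟩
  have hchain : ∀ i : ℕ, i ≤ k → T (x, y) + i ≤ T ((x + (i : ℤ), y)) := by
    intro i hik
    induction i with
    | zero => simp
    | succ i ih =>
      have h1 := ih (by omega)
      have hmi := hmem (i : ℤ) (by positivity) (by exact_mod_cast Nat.le_of_succ_le hik)
      have hmi1 := hmem ((i : ℤ) + 1) (by positivity) (by exact_mod_cast hik)
      have e : x + ((i : ℤ) + 1) = (x + (i : ℤ)) + 1 := by ring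
      rw [e] at hmi1
      have h2 := hcol ((x + (i : ℤ), y)) hmi hmi1
      dsimp only at h2
      have e2 : x + ((i + 1 : ℕ) : ℤ) = x + (i : ℤ) + 1 := by push_cast; ring
      rw [e2]
      omega
  have hm0 := hmem 0 le_rfl (by positivity)
  rw [add_zero] at hm0
  have h0 : 0 < T (x, y) := (hpos (x, y)).1 hm0
  have hcK := hchain k le_rfl
  have hbd := hTk ((x + (k : ℤ), y))
  omega

lemma tableau_of_rowOK {k n : ℕ} (hk : 0 < k) (hkn : k < n) (lam mu : Fin k → ℕ)
    (hmA : ∀ i j : Fin k, i ≤ j → mu j ≤ mu i) (hmB : ∀ i, mu i ≤ n - k)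
    (hlA : ∀ i j : Fin k, i ≤ j → lam j ≤ lam i) (hlB : ∀ i, lam i ≤ n - k)
    (d : ℕ)
    (hrow : ∀ x : ℤ, loopVal n lam (d : ℤ) x ≤ loopVal n mu 0 x + ((n : ℤ) - k)) :
    ∃ T : ℤ × ℤ → ℕ, IsCylTableau n lam mu d T ∧ ∀ p, T p ≤ k := by
  classical
  have hnk : (1 : ℤ) ≤ (n : ℤ) - k := by omega
  have hex : ∀ y : ℤ, ∃ b0 : ℤ, loopVal n mu 0 b0 < y ∧ ∀ z, loopVal n mu 0 z < y → b0 ≤ z := by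
    intro y
    set v0 := loopVal n mu 0 1 with hv0
    have hne : ∃ z, loopVal n mu 0 z < y := by
      set M := max (v0 - y + 1) 1 with hM
      refine ⟨1 + M * k, ?_⟩
      have h1 := loopVal_add_mul_k (n := n) hk mu 0 1 M
      have hM1 : (1 : ℤ) ≤ M := le_max_right _ _
      have hM2 : v0 - y + 1 ≤ M := le_max_left _ _
      have h2 : M ≤ M * ((n : ℤ) - k) := le_mul_of_one_le_right (by linarith) hnk
      rw [h1]
      linarith
    have hbdd : ∃ bl : ℤ, ∀ z, loopVal n mu 0 z < y → bl ≤ z := by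
      set M' := max (y - v0) 0 with hM'
      refine ⟨1 - M' * k, fun z hz => ?_⟩
      by_contra hlt
      push_neg at hlt
      have h1 := loopVal_add_mul_k (n := n) hk mu 0 1 (-M')
      have e : (1 : ℤ) + -M' * k = 1 - M' * k := by ring
      rw [e] at h1
      have hanti := loopVal_anti hk hkn mu hmA hmB 0 (le_of_lt hlt)
      have hM1 : (0 : ℤ) ≤ M' := le_max_right _ _
      have hM2 : y - v0 ≤ M' := le_max_left _ _
      have h2 : M' ≤ M' * ((n : ℤ) - k) := le_mul_of_one_le_right hM1 hnk
      have e2 : v0 - -M' * ((n : ℤ) - k) = v0 + M' * ((n : ℤ) - k) := by ring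
      rw [h1, e2] at hanti
      linarith
    exact Int.exists_least_of_bdd hbdd hne
  choose b hb1 hb2 using hex
  have hbsh : ∀ y : ℤ, b (y + ((n : ℤ) - k)) = b y - k := by
    intro y
    have l1 : loopVal n mu 0 (b y - k) < y + ((n : ℤ) - k) := by
      have h1 := loopVal_add_mul_k (n := n) hk mu 0 (b y) (-1)
      have e : b y + -1 * (k : ℤ) = b y - k := by ring
      rw [e] at h1
      have := hb1 y
      rw [h1]
      linarith
    have l2 : loopVal n mu 0 (b (y + ((n : ℤ) - k)) + k) < y := by
      have h1 := loopVal_add_mul_k (n := n) hk mu 0 (b (y + ((n : ℤ) - k))) 1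
      have e : b (y + ((n : ℤ) - k)) + 1 * (k : ℤ) = b (y + ((n : ℤ) - k)) + k := by ring
      rw [e] at h1
      have := hb1 (y + ((n : ℤ) - k))
      rw [h1]
      linarith
    have a1 := hb2 _ _ l1
    have a2 := hb2 _ _ l2
    omega
  refine ⟨fun p => if loopVal n mu 0 p.1 < p.2 ∧ p.2 ≤ loopVal n lam (d : ℤ) p.1
      then (p.1 - b p.2 + 1).toNat else 0, ⟨?_, ?_, ?_, ?_⟩, ?_⟩
  · intro p
    rw [mem_cylDiagram']
    by_cases hc : loopVal n mu 0 p.1 < p.2 ∧ p.2 ≤ loopVal n lam (d : ℤ) p.1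
    · simp only [if_pos hc]
      have := hb2 p.2 p.1 hc.1
      exact ⟨fun _ => by omega, fun _ => hc⟩
    · simp only [if_neg hc]
      exact ⟨fun h => absurd h hc, by omega⟩
  · intro p
    dsimp only
    have h1 := loopVal_add_mul_k (n := n) hk mu 0 p.1 (-1)
    have h2 := loopVal_add_mul_k (n := n) hk lam (d : ℤ) p.1 (-1)
    have e : p.1 + -1 * (k : ℤ) = p.1 - k := by ring
    rw [e] at h1 h2
    have e1 : loopVal n mu 0 (p.1 - (k : ℤ)) = loopVal n mu 0 p.1 + ((n : ℤ) - k) := by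
      rw [h1]; ring
    have e2 : loopVal n lam (d : ℤ) (p.1 - (k : ℤ)) = loopVal n lam (d : ℤ) p.1 + ((n : ℤ) - k) := by
      rw [h2]; ring
    have hbs := hbsh p.2
    by_cases hc : loopVal n mu 0 p.1 < p.2 ∧ p.2 ≤ loopVal n lam (d : ℤ) p.1
    · have hc' : loopVal n mu 0 (p.1 - (k : ℤ)) < p.2 + ((n : ℤ) - k) ∧
          p.2 + ((n : ℤ) - k) ≤ loopVal n lam (d : ℤ) (p.1 - (k : ℤ)) := by
        constructor
        · rw [e1]; linarith [hc.1]
        · rw [e2]; linarith [hc.2]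
      rw [if_pos hc', if_pos hc]
      omega
    · have hc' : ¬(loopVal n mu 0 (p.1 - (k : ℤ)) < p.2 + ((n : ℤ) - k) ∧
          p.2 + ((n : ℤ) - k) ≤ loopVal n lam (d : ℤ) (p.1 - (k : ℤ))) := by
        rw [e1, e2]
        intro h
        exact hc ⟨by linarith [h.1], by linarith [h.2]⟩
      rw [if_neg hc', if_neg hc]
  · intro p hp hp'
    rw [mem_cylDiagram'] at hp
    rw [mem_cylDiagram'] at hp'
    dsimp only at hp' ⊢
    rw [if_pos hp, if_pos hp']
    have hle := hb2 p.2 p.1 hp.1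
    have hmono : b (p.2 + 1) ≤ b p.2 := hb2 (p.2 + 1) (b p.2) (by have := hb1 p.2; linarith)
    omega
  · intro p hp hp'
    rw [mem_cylDiagram'] at hp
    rw [mem_cylDiagram'] at hp'
    dsimp only at hp' ⊢
    rw [if_pos hp, if_pos hp']
    have hle := hb2 p.2 p.1 hp.1
    omega
  · intro p
    dsimp only
    by_cases hc : loopVal n mu 0 p.1 < p.2 ∧ p.2 ≤ loopVal n lam (d : ℤ) p.1
    · rw [if_pos hc]
      by_contra hbig
      push_neg at hbig
      have hgap : b p.2 + (k : ℤ) ≤ p.1 := by omega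
      have hB := hb1 p.2
      have h2 := loopVal_add_mul_k (n := n) hk lam (d : ℤ) p.1 (-1)
      have e : p.1 + -1 * (k : ℤ) = p.1 - k := by ring
      rw [e] at h2
      have hmono := loopVal_anti hk hkn lam hlA hlB (d : ℤ)
        (show b p.2 ≤ p.1 - (k : ℤ) by omega)
      have hr := hrow (b p.2)
      rw [h2] at hmono
      have := hc.2
      linarith
    · rw [if_neg hc]
      omega

end ToricAux


/-- The toric Schur polynomial `s_{λ/d/μ}(x_1,…,x_k)` is nonzero (i.e. there exists a
semi-standard cylindric tableau of shape `λ/d/μ` with entries at most `k`) if and only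
if the shape `λ/d/μ` is toric. -/
theorem toricSchur_ne_zero_iff (k n : ℕ) (hk : 1 ≤ k) (hkn : k < n)
    (lam mu : Fin k → ℕ) (hlam : lam ∈ PknFinset k n) (hmu : mu ∈ PknFinset k n)
    (d : ℕ) :
    (∃ T : ℤ × ℤ → ℕ, IsCylTableau n lam mu d T ∧ ∀ p, T p ≤ k) ↔
      IsToricShape n lam mu (d : ℤ) 0 := by
  have hk0 : 0 < k := hk
  obtain ⟨hlA, hlB⟩ := pkn_facts hlam
  obtain ⟨hmA, hmB⟩ := pkn_facts hmu
  constructor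
  · rintro ⟨T, hT, hTk⟩
    exact toric_of_rowOK hk0 hkn lam mu (d : ℤ)
      (rowOK_of_tableau hk0 hkn lam mu hmA hmB hlA hlB d T hT hTk)
  · intro htor
    exact tableau_of_rowOK hk0 hkn lam mu hmA hmB hlA hlB d
      (rowOK_of_toric hk0 hkn lam mu (d : ℤ) htor)
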